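/- If x ≥ 0 and y ≥ 0 satisfy x = βy²/(γ+y) + (1-d₀-α/(1+x))x and y = αx/(1+x) + (1-μ)y with x > 0, then x is a positive root of the quadratic d₀μ(α+γμ)x² + (μ(d₀γμ + (α+d₀)(α+γμ)) - α²β)x + γμ²(α+d₀) = 0 and y = αx/(μ(1+x)). -/

import Mathlib

/-- A positive fixed point of `W` gives a positive root of the quadratic,
and its second coordinate is `α x / (μ (1 + x))`. -/
theorem stmt_1 (α β γ μ d₀ : ℝ)
    (hα : 0 < α) (hβ : 0 < β) (hγ : 0 < γ) (hμ0 : 0 < μ) (hμ1 : μ ≤ 1)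
    (hd₀ : 0 < d₀) (hαd : α + d₀ ≤ 1)
    (x y : ℝ) (hx : 0 ≤ x) (hy : 0 ≤ y)
    (hfix1 : x = β * y ^ 2 / (γ + y) + (1 - d₀ - α / (1 + x)) * x)
    (hfix2 : y = α * x / (1 + x) + (1 - μ) * y)
    (hxpos : 0 < x) :
    d₀ * μ * (α + γ * μ) * x ^ 2
      + (μ * (d₀ * γ * μ + (α + d₀) * (α + γ * μ)) - α ^ 2 * β) * x
      + γ * μ ^ 2 * (α + d₀) = 0
    ∧ y = α * x / (μ * (1 + x)) := by
  have h1x : (0:ℝ) < 1 + x := by linarith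
  have hgy : (0:ℝ) < γ + y := by linarith
  have hμy : μ * y = α * x / (1 + x) := by linarith
  have hy' : y = α * x / (μ * (1 + x)) := by
    rw [eq_div_iff (by positivity)]
    field_simp at hμy
    linarith
  refine ⟨?_, hy'⟩
  subst hy'
  have hfix1' := hfix1
  field_simp at hfix1'
  have hmain : μ * x * (1+x)^2 *
      (d₀ * μ * (α + γ * μ) * x ^ 2
      + (μ * (d₀ * γ * μ + (α + d₀) * (α + γ * μ)) - α ^ 2 * β) * x
      + γ * μ ^ 2 * (α + d₀)) = 0 := by linear_combination (μ * x * (1+x)^2) * hfix1'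
  have hpos : (0:ℝ) < μ * x * (1+x)^2 := by positivity
  rcases mul_eq_zero.mp hmain with h | h
  · exact absurd h hpos.ne'
  · exact h
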